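/- Let L be a subfield of ℂ, let ν ≥ 1 be an integer, and let A, B ∈ ℂ[[u]] be formal power series with ord(A) = ν − 1, B(0) ≠ 0, and all coefficients of A and B lying in L. Then every formal power series s ∈ ℂ[[t]] with ord(s) = 1 satisfying A(s(t))·s'(t) = t^{ν−1}·B(s(t)) has (coeff_1(s))^ν ∈ L, and every coefficient of s lies in the subfield L(coeff_1(s)) of ℂ generated by L and coeff_1(s). -/

import Mathlib

open Finset

/-- Composition `A(s(t))` of formal power series (intended for `s` with zero
constant term, in which case `coeff n (s^k) = 0` for `k > n`). -/
noncomputable def pscomp (A s : PowerSeries ℂ) : PowerSeries ℂ :=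
  PowerSeries.mk fun n => ∑ k ∈ Finset.range (n + 1),
    (PowerSeries.coeff k A) * PowerSeries.coeff n (s ^ k)

namespace AssocEqAux

lemma coeff_zero_of_dvd {f : PowerSeries ℂ} {m d : ℕ} (h : (PowerSeries.X : PowerSeries ℂ)^m ∣ f)
    (hd : d < m) : PowerSeries.coeff d f = 0 :=
  PowerSeries.X_pow_dvd_iff.mp h d hd

lemma coeff_mul_of_dvd {f g : PowerSeries ℂ} {a b : ℕ}
    (hf : (PowerSeries.X : PowerSeries ℂ)^a ∣ f) (hg : (PowerSeries.X : PowerSeries ℂ)^b ∣ g) :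
    PowerSeries.coeff (a+b) (f*g) = PowerSeries.coeff a f * PowerSeries.coeff b g := by
  obtain ⟨f₁, rfl⟩ := hf
  obtain ⟨g₁, rfl⟩ := hg
  have h1 : (PowerSeries.X : PowerSeries ℂ)^a * f₁ * ((PowerSeries.X : PowerSeries ℂ)^b * g₁)
      = (PowerSeries.X : PowerSeries ℂ)^(a+b) * (f₁ * g₁) := by ring
  rw [h1, PowerSeries.coeff_X_pow_mul', PowerSeries.coeff_X_pow_mul',
    PowerSeries.coeff_X_pow_mul']
  simp [PowerSeries.coeff_zero_eq_constantCoeff, map_mul]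

lemma coeff_pow_self {f : PowerSeries ℂ} (h : PowerSeries.constantCoeff f = 0) (k : ℕ) :
    PowerSeries.coeff k (f^k) = (PowerSeries.coeff 1 f)^k := by
  obtain ⟨g, rfl⟩ := PowerSeries.X_dvd_iff.mpr h
  have h1 : (PowerSeries.X * g)^k = (PowerSeries.X : PowerSeries ℂ)^k * g^k := mul_pow _ _ _
  rw [h1, PowerSeries.coeff_X_pow_mul']
  have h3 : PowerSeries.coeff 1 (PowerSeries.X * g) = PowerSeries.coeff 0 g := by
    simpa using PowerSeries.coeff_succ_X_mul 0 g
  rw [h3]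
  simp [PowerSeries.coeff_zero_eq_constantCoeff, map_pow]

lemma mem_coeff_mul (K : Subfield ℂ) {f g : PowerSeries ℂ}
    (hf : ∀ i, PowerSeries.coeff i f ∈ K) (hg : ∀ i, PowerSeries.coeff i g ∈ K) (i : ℕ) :
    PowerSeries.coeff i (f * g) ∈ K := by
  rw [PowerSeries.coeff_mul]
  exact sum_mem fun p _ => mul_mem (hf _) (hg _)

lemma mem_coeff_pow (K : Subfield ℂ) {f : PowerSeries ℂ}
    (hf : ∀ i, PowerSeries.coeff i f ∈ K) (k i : ℕ) :
    PowerSeries.coeff i (f ^ k) ∈ K := by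
  induction k generalizing i with
  | zero => simp only [pow_zero, PowerSeries.coeff_one]; split <;> simp [one_mem, zero_mem]
  | succ k ih => rw [pow_succ]; exact mem_coeff_mul K (fun j => ih j) hf i

/-- Core comparison between `s^k` and `u^k` where `u` is the truncation of `s` in
degrees `≤ n`, valid in degrees `d ≤ k + n`. -/
lemma core {s u : PowerSeries ℂ} (hs0 : PowerSeries.coeff 0 s = 0) {n : ℕ} (hn : 1 ≤ n)
    (hu : ∀ i, PowerSeries.coeff i u = if i < n+1 then PowerSeries.coeff i s else 0)
    (k d : ℕ) (hd : d ≤ k + n) :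
    PowerSeries.coeff d (s^k) =
      PowerSeries.coeff d (u^k)
      + (if d = k + n then
          (k : ℂ) * (PowerSeries.coeff 1 s)^(k-1) * PowerSeries.coeff (n+1) s else 0) := by
  set r : PowerSeries ℂ := s - u with hr_def
  have hsur : s = u + r := by rw [hr_def]; ring
  have hr : (PowerSeries.X : PowerSeries ℂ)^(n+1) ∣ r := by
    rw [PowerSeries.X_pow_dvd_iff]
    intro m hm
    rw [hr_def, map_sub, hu m, if_pos hm, sub_self]
  have hrc : PowerSeries.coeff (n+1) r = PowerSeries.coeff (n+1) s := by
    rw [hr_def, map_sub, hu, if_neg (lt_irrefl _), sub_zero]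
  have hXu : (PowerSeries.X : PowerSeries ℂ) ∣ u := by
    rw [PowerSeries.X_dvd_iff, ← PowerSeries.coeff_zero_eq_constantCoeff_apply, hu]
    simp [hs0]
  have hu1 : PowerSeries.coeff 1 u = PowerSeries.coeff 1 s := by
    rw [hu]; exact if_pos (by omega)
  rcases Nat.eq_zero_or_pos k with hk | hk
  · subst hk; simp
  -- binomial expansion
  have hbin : s ^ k = ∑ j ∈ range (k+1), r^j * u^(k-j) * ((k.choose j : ℕ) : PowerSeries ℂ) := by
    rw [hsur, add_comm u r]; exact add_pow r u k
  rw [hbin, map_sum]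
  have hsub : ({0, 1} : Finset ℕ) ⊆ range (k+1) := by
    intro x hx; simp only [mem_insert, mem_singleton] at hx
    rcases hx with rfl | rfl <;> simp [Nat.lt_succ_iff, hk]
  rw [← Finset.sum_subset hsub (fun j hj hj2 => ?_)]
  · -- sum over {0,1}
    rw [Finset.sum_pair (by norm_num : (0:ℕ) ≠ 1)]
    have hF0 : PowerSeries.coeff d (r^0 * u^(k-0) * ((k.choose 0 : ℕ) : PowerSeries ℂ))
        = PowerSeries.coeff d (u^k) := by
      simp
    have hF1 : PowerSeries.coeff d (r^1 * u^(k-1) * ((k.choose 1 : ℕ) : PowerSeries ℂ))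
        = (if d = k + n then
            (k : ℂ) * (PowerSeries.coeff 1 s)^(k-1) * PowerSeries.coeff (n+1) s else 0) := by
      have hcast : ((k.choose 1 : ℕ) : PowerSeries ℂ) = PowerSeries.C ((k : ℕ) : ℂ) := by
        rw [Nat.choose_one_right, map_natCast]
      rw [hcast, pow_one, PowerSeries.coeff_mul_C]
      by_cases hdk : d = k + n
      · have hc0u : PowerSeries.constantCoeff u = 0 := by
          rw [← PowerSeries.coeff_zero_eq_constantCoeff_apply, hu]; simp [hs0]
        have hstep : PowerSeries.coeff d (r * u^(k-1))
            = PowerSeries.coeff (n+1) s * (PowerSeries.coeff 1 s)^(k-1) := by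
          have hkn : d = (n+1) + (k-1) := by omega
          rw [hkn, coeff_mul_of_dvd hr (pow_dvd_pow_of_dvd hXu (k-1)), hrc,
            coeff_pow_self hc0u, hu1]
        rw [if_pos hdk, hstep]
        ring
      · rw [if_neg hdk]
        have hdvd : (PowerSeries.X : PowerSeries ℂ)^((n+1)+(k-1)) ∣ r * u^(k-1) := by
          rw [pow_add]; exact mul_dvd_mul hr (pow_dvd_pow_of_dvd hXu (k-1))
        rw [coeff_zero_of_dvd hdvd (by omega), zero_mul]
    rw [hF0, hF1]
  · -- vanishing terms for j ≥ 2
    simp only [mem_insert, mem_singleton, not_or] at hj2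
    have hj2' : 2 ≤ j := by omega
    have hjk : j ≤ k := by simp only [mem_range, Nat.lt_succ_iff] at hj; exact hj
    have hdvd : (PowerSeries.X : PowerSeries ℂ)^((n+1)*j+(k-j)) ∣
        r^j * u^(k-j) * ((k.choose j : ℕ) : PowerSeries ℂ) := by
      apply dvd_mul_of_dvd_left
      rw [pow_add]
      exact mul_dvd_mul (by rw [pow_mul]; exact pow_dvd_pow_of_dvd hr j)
        (pow_dvd_pow_of_dvd hXu (k-j))
    have h3 : (n+1)*j = n*j + j := by ring
    have h4 : n*2 ≤ n*j := Nat.mul_le_mul_left _ hj2'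
    exact coeff_zero_of_dvd hdvd (by omega)

lemma coeff_derivativeFun' (f : PowerSeries ℂ) (n : ℕ) :
    PowerSeries.coeff n f.derivativeFun = PowerSeries.coeff (n + 1) f * (n + 1) := by
  unfold PowerSeries.derivativeFun; exact PowerSeries.coeff_derivative f n

lemma coeff_pscomp (A f : PowerSeries ℂ) (d : ℕ) :
    PowerSeries.coeff d (pscomp A f) = ∑ k ∈ range (d + 1),
      (PowerSeries.coeff k A) * PowerSeries.coeff d (f ^ k) := by
  rw [pscomp, PowerSeries.coeff_mk]

end AssocEqAux

open AssocEqAux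

/-- Rationality of solutions of the associated differential equation: if `A` and `B`
have all coefficients in a subfield `L ⊆ ℂ`, `ord A = ν - 1` and `B(0) ≠ 0`, then
every order-one solution `s` of `A(s(t)) s'(t) = t^{ν-1} B(s(t))` satisfies
`(coeff₁ s)^ν ∈ L`, and all coefficients of `s` lie in `L(coeff₁ s)`. -/
theorem assoc_equation_coefficients_field
    (L : Subfield ℂ) (ν : ℕ) (hν : 1 ≤ ν) (A B : PowerSeries ℂ)
    (hA : A.order = ((ν - 1 : ℕ)))
    (hB : PowerSeries.constantCoeff B ≠ 0)
    (hAL : ∀ i : ℕ, PowerSeries.coeff i A ∈ L)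
    (hBL : ∀ i : ℕ, PowerSeries.coeff i B ∈ L) :
    ∀ s : PowerSeries ℂ, s.order = 1 →
      pscomp A s * s.derivativeFun = PowerSeries.X ^ (ν - 1) * pscomp B s →
      (PowerSeries.coeff 1 s) ^ ν ∈ L ∧
      ∀ i : ℕ, PowerSeries.coeff i s ∈
        Subfield.closure ((L : Set ℂ) ∪ {PowerSeries.coeff 1 s}) := by
  intro s hsord heq
  classical
  obtain ⟨μ, rfl⟩ : ∃ μ, ν = μ + 1 := ⟨ν - 1, (Nat.succ_pred_eq_of_pos hν).symm⟩
  simp only [Nat.add_sub_cancel] at hA heq ⊢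
  -- basic facts about s and A
  have hsord' : s.order = (1 : ℕ) := by exact_mod_cast hsord
  obtain ⟨hs1, hs0'⟩ := PowerSeries.order_eq_nat.mp hsord'
  have hs0 : PowerSeries.coeff 0 s = 0 := hs0' 0 one_pos
  have hc0s : PowerSeries.constantCoeff s = 0 := by
    rw [← PowerSeries.coeff_zero_eq_constantCoeff_apply]; exact hs0
  obtain ⟨ha, haz⟩ := PowerSeries.order_eq_nat.mp hA
  -- vanishing of low coefficients of pscomp A f
  have P2 : ∀ (f : PowerSeries ℂ) (d : ℕ), d < μ → PowerSeries.coeff d (pscomp A f) = 0 := by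
    intro f d hd
    rw [coeff_pscomp]
    refine Finset.sum_eq_zero fun k hk => ?_
    rw [haz k (by simp only [mem_range] at hk; omega), zero_mul]
  have P4 : PowerSeries.coeff μ (pscomp A s)
      = PowerSeries.coeff μ A * (PowerSeries.coeff 1 s) ^ μ := by
    rw [coeff_pscomp, Finset.sum_eq_single μ]
    · rw [coeff_pow_self hc0s]
    · intro k hk hkμ
      rw [haz k (by simp only [mem_range] at hk; omega), zero_mul]
    · intro h; exact absurd (self_mem_range_succ μ) h
  have hcoeff : ∀ d, PowerSeries.coeff d (pscomp A s * s.derivativeFun)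
      = PowerSeries.coeff d (PowerSeries.X ^ μ * pscomp B s) := fun d => by rw [heq]
  -- base case: degree μ
  have hbase := hcoeff μ
  rw [PowerSeries.coeff_mul, Finset.Nat.sum_antidiagonal_eq_sum_range_succ_mk] at hbase
  rw [Finset.sum_eq_single μ (fun i hi hiμ => by
      rw [P2 s i (by simp only [mem_range] at hi; omega), zero_mul])
    (fun h => absurd (self_mem_range_succ μ) h)] at hbase
  rw [P4, Nat.sub_self, AssocEqAux.coeff_derivativeFun'] at hbase
  have hRHSμ : PowerSeries.coeff μ ((PowerSeries.X : PowerSeries ℂ) ^ μ * pscomp B s)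
      = PowerSeries.coeff 0 B := by
    rw [PowerSeries.coeff_X_pow_mul', if_pos le_rfl, Nat.sub_self, coeff_pscomp,
      Finset.sum_range_one, pow_zero]
    simp
  rw [hRHSμ] at hbase
  rw [PowerSeries.coeff_zero_eq_constantCoeff_apply] at hbase
  -- hbase : coeff μ A * c₁^μ * (c₁ * 1) = constantCoeff B
  have hgoal1 : (PowerSeries.coeff 1 s) ^ (μ + 1) ∈ L := by
    have h1 : (PowerSeries.coeff 1 s) ^ (μ + 1)
        = PowerSeries.constantCoeff B * (PowerSeries.coeff μ A)⁻¹ := by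
      field_simp
      rw [mul_comm]
      push_cast at hbase
      linear_combination hbase
    rw [h1]
    have hB0 : PowerSeries.constantCoeff B ∈ L := by
      have := hBL 0
      rwa [PowerSeries.coeff_zero_eq_constantCoeff_apply] at this
    exact mul_mem hB0 (inv_mem (hAL μ))
  refine ⟨hgoal1, ?_⟩
  set K := Subfield.closure ((L : Set ℂ) ∪ {PowerSeries.coeff 1 s}) with hKdef
  have hKL : ∀ x ∈ L, x ∈ K := fun x hx => Subfield.subset_closure (Or.inl hx)
  have hc1K : PowerSeries.coeff 1 s ∈ K := Subfield.subset_closure (Or.inr rfl)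
  -- the inductive step
  have step : ∀ n : ℕ, 1 ≤ n → (∀ j, j ≤ n → PowerSeries.coeff j s ∈ K) →
      PowerSeries.coeff (n+1) s ∈ K := by
    intro n hn ihK
    set u : PowerSeries ℂ := ((PowerSeries.trunc (n+1) s : Polynomial ℂ) : PowerSeries ℂ)
      with hudef
    have hu : ∀ i, PowerSeries.coeff i u
        = if i < n+1 then PowerSeries.coeff i s else 0 := by
      intro i; rw [hudef, Polynomial.coeff_coe, PowerSeries.coeff_trunc]
    have huK : ∀ i, PowerSeries.coeff i u ∈ K := by
      intro i; rw [hu]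
      split
      · exact ihK i (by omega)
      · exact zero_mem K
    have hu1 : PowerSeries.coeff 1 u = PowerSeries.coeff 1 s := by
      rw [hu]; exact if_pos (by omega)
    have hPAuK : ∀ d, PowerSeries.coeff d (pscomp A u) ∈ K := fun d => by
      rw [coeff_pscomp]
      exact sum_mem fun k _ => mul_mem (hKL _ (hAL k)) (mem_coeff_pow K huK k d)
    have hPBuK : ∀ d, PowerSeries.coeff d (pscomp B u) ∈ K := fun d => by
      rw [coeff_pscomp]
      exact sum_mem fun k _ => mul_mem (hKL _ (hBL k)) (mem_coeff_pow K huK k d)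
    have hu'K : ∀ d, PowerSeries.coeff d u.derivativeFun ∈ K := fun d => by
      rw [AssocEqAux.coeff_derivativeFun']
      exact mul_mem (huK _) (by push_cast; exact add_mem (natCast_mem K d) (one_mem K))
    -- M: the two pscomps agree below degree μ + n
    have hM : ∀ i, i < μ + n →
        PowerSeries.coeff i (pscomp A s) = PowerSeries.coeff i (pscomp A u) := by
      intro i hi
      rw [coeff_pscomp, coeff_pscomp]
      refine Finset.sum_congr rfl fun k hk => ?_
      rcases lt_or_ge k μ with h | h
      · rw [haz k h, zero_mul, zero_mul]
      · rw [core hs0 hn hu k i (by omega), if_neg (by omega), add_zero]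
    -- D: difference at degree μ + n
    have hD : PowerSeries.coeff (μ+n) (pscomp A s)
        = PowerSeries.coeff (μ+n) (pscomp A u)
          + PowerSeries.coeff μ A *
            ((μ:ℂ) * (PowerSeries.coeff 1 s)^(μ-1) * PowerSeries.coeff (n+1) s) := by
      rw [coeff_pscomp, coeff_pscomp]
      have hterm : ∀ k ∈ range (μ+n+1),
          PowerSeries.coeff k A * PowerSeries.coeff (μ+n) (s^k)
          = PowerSeries.coeff k A * PowerSeries.coeff (μ+n) (u^k)
            + (if k = μ then PowerSeries.coeff μ A *
                ((μ:ℂ) * (PowerSeries.coeff 1 s)^(μ-1) * PowerSeries.coeff (n+1) s)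
              else 0) := by
        intro k hk
        rcases lt_or_ge k μ with h | h
        · rw [haz k h, zero_mul, zero_mul, if_neg (by omega), zero_add]
        · rw [core hs0 hn hu k (μ+n) (by omega)]
          by_cases hkμ : k = μ
          · subst hkμ; rw [if_pos rfl, if_pos rfl, mul_add]
          · rw [if_neg (by omega), if_neg hkμ, add_zero, add_zero]
      rw [Finset.sum_congr rfl hterm, Finset.sum_add_distrib,
        Finset.sum_ite_eq' (range (μ+n+1)) μ, if_pos (by simp only [mem_range]; omega)]
    -- E1
    have hE1 : PowerSeries.coeff n (pscomp B s) = PowerSeries.coeff n (pscomp B u) := by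
      rw [coeff_pscomp, coeff_pscomp]
      refine Finset.sum_congr rfl fun k _ => ?_
      rw [core hs0 hn hu k n (Nat.le_add_left n k)]
      rcases Nat.eq_zero_or_pos k with rfl | hk1
      · simp
      · rw [if_neg (by omega), add_zero]
    -- main equation at degree μ + n
    have hmain := hcoeff (μ + n)
    rw [PowerSeries.coeff_mul, Finset.Nat.sum_antidiagonal_eq_sum_range_succ_mk] at hmain
    have hRHS : PowerSeries.coeff (μ+n) ((PowerSeries.X : PowerSeries ℂ) ^ μ * pscomp B s)
        = PowerSeries.coeff n (pscomp B u) := by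
      rw [add_comm μ n, PowerSeries.coeff_X_pow_mul, hE1]
    rw [hRHS] at hmain
    -- termwise comparison of the left side
    have hpowfix : (μ:ℂ) * (PowerSeries.coeff 1 s)^(μ-1) * PowerSeries.coeff 1 s
        = (μ:ℂ) * (PowerSeries.coeff 1 s)^μ := by
      rcases Nat.eq_zero_or_pos μ with rfl | hμ
      · simp
      · rw [mul_assoc, ← pow_succ, Nat.sub_add_cancel hμ]
    have hterm2 : ∀ i ∈ range (μ+n+1),
        PowerSeries.coeff i (pscomp A s) * PowerSeries.coeff (μ+n-i) s.derivativeFun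
        = PowerSeries.coeff i (pscomp A u) * PowerSeries.coeff (μ+n-i) u.derivativeFun
          + ((if i = μ then ((n:ℂ)+1) * (PowerSeries.coeff μ A *
                (PowerSeries.coeff 1 s)^μ) * PowerSeries.coeff (n+1) s else 0)
            + (if i = μ+n then (μ:ℂ) * (PowerSeries.coeff μ A *
                (PowerSeries.coeff 1 s)^μ) * PowerSeries.coeff (n+1) s else 0)) := by
      intro i hi
      simp only [mem_range] at hi
      rcases lt_trichotomy i μ with h | heq | h
      · rw [P2 s i h, P2 u i h, zero_mul, zero_mul, if_neg (by omega), if_neg (by omega)]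
        ring
      · -- i = μ
        rw [heq]
        have hsub : μ + n - μ = n := by omega
        rw [hsub, if_pos rfl, if_neg (by omega), P4,
          AssocEqAux.coeff_derivativeFun', AssocEqAux.coeff_derivativeFun',
          hu, if_neg (by omega)]
        push_cast
        ring
      · -- i > μ
        rcases lt_or_ge i (μ+n) with h2 | h2
        · -- μ < i < μ + n
          have hj : μ + n - i + 1 < n + 1 := by omega
          rw [hM i h2, AssocEqAux.coeff_derivativeFun', AssocEqAux.coeff_derivativeFun',
            hu, if_pos hj, if_neg (by omega), if_neg (by omega)]
          ring
        · -- i = μ + n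
          have hieq : i = μ + n := by omega
          subst hieq
          rw [Nat.sub_self, if_neg (by omega), if_pos rfl,
            AssocEqAux.coeff_derivativeFun', AssocEqAux.coeff_derivativeFun', hD, hu1]
          push_cast
          rw [add_mul]
          rw [show PowerSeries.coeff (0+1) s = PowerSeries.coeff 1 s from rfl]
          linear_combination (PowerSeries.coeff μ A * PowerSeries.coeff (n+1) s) * hpowfix
    rw [Finset.sum_congr rfl hterm2, Finset.sum_add_distrib, Finset.sum_add_distrib,
      Finset.sum_ite_eq' (range (μ+n+1)) μ, Finset.sum_ite_eq' (range (μ+n+1)) (μ+n),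
      if_pos (by simp only [mem_range]; omega), if_pos (by simp only [mem_range]; omega)]
      at hmain
    -- solve for coeff (n+1) s
    set Su := ∑ i ∈ range (μ+n+1), PowerSeries.coeff i (pscomp A u) *
      PowerSeries.coeff (μ+n-i) u.derivativeFun with hSudef
    have hSuK : Su ∈ K := sum_mem fun i _ => mul_mem (hPAuK i) (hu'K _)
    have hsolve : ((μ:ℂ)+(n:ℂ)+1) * (PowerSeries.coeff μ A *
        (PowerSeries.coeff 1 s)^μ) * PowerSeries.coeff (n+1) s
        = PowerSeries.coeff n (pscomp B u) - Su := by
      linear_combination hmain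
    have hneA : PowerSeries.coeff μ A ≠ 0 := ha
    have hnec : (PowerSeries.coeff 1 s)^μ ≠ 0 := pow_ne_zero _ hs1
    have hnen : ((μ:ℂ)+(n:ℂ)+1) ≠ 0 := by
      have : ((μ+n+1 : ℕ) : ℂ) ≠ 0 := Nat.cast_ne_zero.mpr (by omega)
      push_cast at this
      convert this using 1
    have hval : PowerSeries.coeff (n+1) s
        = (PowerSeries.coeff n (pscomp B u) - Su) *
          (((μ:ℂ)+(n:ℂ)+1) * (PowerSeries.coeff μ A * (PowerSeries.coeff 1 s)^μ))⁻¹ := by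
      rw [← hsolve]
      field_simp
    rw [hval]
    refine mul_mem (sub_mem (hPBuK n) hSuK) (inv_mem (mul_mem ?_ (mul_mem (hKL _ (hAL μ))
      (pow_mem hc1K μ))))
    have hcast : ((μ:ℂ)+(n:ℂ)+1) = ((μ+n+1 : ℕ) : ℂ) := by push_cast; ring
    rw [hcast]
    exact natCast_mem K (μ+n+1)
  -- full induction
  have hall : ∀ m : ℕ, ∀ j ≤ m, PowerSeries.coeff j s ∈ K := by
    intro m
    induction m with
    | zero =>
      intro j hj
      have : j = 0 := by omega
      subst this
      rw [hs0]; exact zero_mem K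
    | succ m ihm =>
      intro j hj
      rcases Nat.lt_succ_iff_lt_or_eq.mp (Nat.lt_succ_of_le hj) with h | rfl
      · exact ihm j (by omega)
      · rcases Nat.eq_zero_or_pos m with rfl | hm
        · exact hc1K
        · exact step m hm (fun j hj => ihm j hj)
  exact fun i => hall i i le_rfl
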